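/- Let μ be a real number and n, s integers with n ≥ s ≥ 1 and n > 1. Then E_{s,0}^μ(n) = D_{s−1,0}^{μ+3}(n−1) and D_{s,0}^μ(n) = E_{s−1,0}^{μ+3}(n−1). -/

import Mathlib

open Finset

/-- The determinant `E_{s,t}^μ(n)` with entries `C(μ+i+j+s+t-4, j+t-1) - δ_{i+s,j+t}`
(1-based indices `i,j`), where `C` is the generalized binomial coefficient. -/
noncomputable def detE (μ : ℝ) (s : ℤ) (t : ℕ) (n : ℕ) : ℝ :=
  Matrix.det (Matrix.of fun i j : Fin n =>
    Ring.choose (μ + (i.1 + 1 : ℕ) + (j.1 + 1 : ℕ) + s + t - 4) (j.1 + t) -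
      if (i.1 + 1 : ℤ) + s = (j.1 + 1 : ℤ) + t then 1 else 0)

/-- The determinant `D_{s,t}^μ(n)` with entries `C(μ+i+j+s+t-4, j+t-1) + δ_{i+s,j+t}`. -/
noncomputable def detD (μ : ℝ) (s : ℤ) (t : ℕ) (n : ℕ) : ℝ :=
  Matrix.det (Matrix.of fun i j : Fin n =>
    Ring.choose (μ + (i.1 + 1 : ℕ) + (j.1 + 1 : ℕ) + s + t - 4) (j.1 + t) +
      if (i.1 + 1 : ℤ) + s = (j.1 + 1 : ℤ) + t then 1 else 0)

/-- The rising factorial (Pochhammer symbol) `(a)_b = a(a+1)⋯(a+b-1)`. -/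
noncomputable def poch (a : ℝ) (b : ℕ) : ℝ := (ascPochhammer ℝ b).eval a




lemma hockey (a : ℝ) (r : ℕ) :
    ∑ k ∈ Finset.range (r + 1), Ring.choose (a + k) k = Ring.choose (a + r + 1) r := by
  induction r with
  | zero => simp
  | succ r ih =>
    rw [Finset.sum_range_succ, ih]
    have h : a + ((r + 1 : ℕ) : ℝ) + 1 = (a + r + 1) + 1 := by push_cast; ring
    rw [h, Ring.choose_succ_succ]
    congr 2
    push_cast; ring

lemma pascal_diff (x : ℝ) (k : ℕ) :
    Ring.choose (x + 1) (k + 1) - Ring.choose x (k + 1) = Ring.choose x k := by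
  rw [Ring.choose_succ_succ]; ring

lemma reduce (μ : ℝ) (s : ℕ) (hs : 1 ≤ s) (ε : ℝ) (m : ℕ) :
    (Matrix.of fun i j : Fin (m + 2) =>
      Ring.choose (μ + i.1 + j.1 + s) j.1 + ε * (if i.1 + s = j.1 then 1 else 0)).det
    = (Matrix.of fun i j : Fin (m + 1) =>
      Ring.choose (μ + i.1 + j.1 + s + 2) j.1 - ε * (if i.1 + s = j.1 + 1 then 1 else 0)).det := by
  set M : Matrix (Fin (m + 2)) (Fin (m + 2)) ℝ := Matrix.of fun i j =>
      Ring.choose (μ + i.1 + j.1 + s) j.1 + ε * (if i.1 + s = j.1 then 1 else 0) with hM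
  set L : Matrix (Fin (m + 2)) (Fin (m + 2)) ℝ := Matrix.of fun i j =>
      if i = j then 1 else if i.1 = j.1 + 1 then -1 else 0 with hL
  have hdetL : L.det = 1 := by
    rw [Matrix.det_of_lowerTriangular L (by
      intro i j hij
      rw [OrderDual.toDual_lt_toDual] at hij
      simp only [hL, Matrix.of_apply]
      rw [if_neg (by omega), if_neg (by omega)])]
    simp [hL]
  have hLsplit : ∀ (i : Fin (m + 1)) (k : Fin (m + 2)),
      L i.succ k = (if k = i.succ then 1 else 0) - (if k = i.castSucc then 1 else 0) := by
    intro i k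
    simp only [hL, Matrix.of_apply, Fin.ext_iff, Fin.val_succ, Fin.coe_castSucc]
    have hik := i.isLt; have hkk := k.isLt
    split_ifs <;> (try norm_num) <;> (try omega)
  have mul0 : ∀ j, (L * M) 0 j = M 0 j := by
    intro j
    rw [Matrix.mul_apply]
    have : ∀ k : Fin (m + 2), L 0 k * M k j = if k = 0 then M k j else 0 := by
      intro k
      simp only [hL, Matrix.of_apply]
      rcases eq_or_ne (0 : Fin (m+2)) k with h | h
      · rw [if_pos h, if_pos h.symm, one_mul]
      · rw [if_neg h, if_neg (Ne.symm h), if_neg (by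
          have := k.isLt; simp only [Fin.val_zero]; omega), zero_mul]
    rw [Finset.sum_congr rfl fun k _ => this k, Finset.sum_ite_eq' Finset.univ 0]
    simp
  have mulS : ∀ (i : Fin (m + 1)) (j : Fin (m + 2)),
      (L * M) i.succ j = M i.succ j - M i.castSucc j := by
    intro i j
    rw [Matrix.mul_apply]
    simp only [hLsplit, sub_mul, ite_mul, one_mul, zero_mul, Finset.sum_sub_distrib,
      Finset.sum_ite_eq' Finset.univ, Finset.mem_univ, if_pos]
  have col0 : ∀ i : Fin (m + 2), (L * M) i 0 = if i = 0 then 1 else 0 := by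
    intro i
    induction i using Fin.cases with
    | zero =>
      rw [mul0, if_pos rfl]
      simp only [hM, Matrix.of_apply, Fin.val_zero, Nat.cast_zero]
      simp [Ring.choose_zero_right, show s ≠ 0 by omega]
    | succ i =>
      rw [mulS, if_neg (Fin.succ_ne_zero i)]
      simp only [hM, Matrix.of_apply, Fin.val_zero, Fin.val_succ, Fin.coe_castSucc,
        Nat.cast_zero]
      simp [Ring.choose_zero_right, show s ≠ 0 by omega]
  have hdet1 : M.det = ((L * M).submatrix Fin.succ Fin.succ).det := by
    have h1 : (L * M).det = M.det := by rw [Matrix.det_mul, hdetL, one_mul]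
    rw [← h1, Matrix.det_succ_column_zero]
    rw [Fin.sum_univ_succ]
    have hz : ∀ i : Fin (m + 1),
        (-1 : ℝ) ^ ((i.succ : Fin (m+2)) : ℕ) * (L * M) i.succ 0 *
          ((L * M).submatrix (Fin.succAbove i.succ) Fin.succ).det = 0 := by
      intro i
      rw [col0, if_neg (Fin.succ_ne_zero i)]
      ring
    rw [Finset.sum_congr rfl fun i _ => hz i]
    simp only [Finset.sum_const_zero, add_zero, col0, if_pos rfl, Fin.val_zero, pow_zero,
      one_mul, Fin.succAbove_zero]
    norm_num
  -- the differenced minor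
  set B : Matrix (Fin (m + 1)) (Fin (m + 1)) ℝ := Matrix.of fun i k =>
      Ring.choose (μ + i.1 + k.1 + s + 1) k.1 +
        ε * ((if i.1 + s = k.1 then 1 else 0) - (if i.1 + s = k.1 + 1 then 1 else 0)) with hB
  have hBeq : (L * M).submatrix Fin.succ Fin.succ = B := by
    ext i k
    rw [Matrix.submatrix_apply, mulS]
    simp only [hM, hB, Matrix.of_apply, Fin.val_succ, Fin.coe_castSucc]
    have h1 : (μ : ℝ) + (i.1 + 1 : ℕ) + (k.1 + 1 : ℕ) + s = (μ + i.1 + (k.1 + 1 : ℕ) + s) + 1 := by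
      push_cast; ring
    have h2 : (μ : ℝ) + i.1 + (k.1 + 1 : ℕ) + s = (μ + i.1 + k.1 + s + 1) := by
      push_cast; ring
    rw [h1, h2, ← pascal_diff (μ + i.1 + k.1 + s + 1) k.1]
    have c1 : (i.1 + 1 + s = k.1 + 1) ↔ (i.1 + s = k.1) := by omega
    simp only [c1]
    ring
  set U : Matrix (Fin (m + 1)) (Fin (m + 1)) ℝ := Matrix.of fun k j =>
      if k ≤ j then 1 else 0 with hU
  have hdetU : U.det = 1 := by
    rw [Matrix.det_of_upperTriangular (by
      intro i j hij
      simp only [hU, Matrix.of_apply]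
      exact if_neg (not_le.mpr hij))]
    simp [hU]
  have key : ∀ (iv jv : ℕ), jv < m + 1 →
      ∑ k ∈ Finset.range (jv + 1),
        (Ring.choose (μ + iv + k + s + 1) k +
          ε * ((if iv + s = k then 1 else 0) - (if iv + s = k + 1 then 1 else 0)))
      = Ring.choose (μ + iv + jv + s + 2) jv - ε * (if iv + s = jv + 1 then 1 else 0) := by
    intro iv jv _
    rw [Finset.sum_add_distrib, ← Finset.mul_sum, Finset.sum_sub_distrib]
    have e1 : ∑ k ∈ Finset.range (jv + 1), Ring.choose (μ + iv + k + s + 1) k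
        = Ring.choose (μ + iv + jv + s + 2) jv := by
      rw [Finset.sum_congr rfl (fun k _ => by
        rw [show (μ + iv + k + s + 1 : ℝ) = (μ + iv + s + 1) + k by push_cast; ring]),
        hockey]
      congr 1; push_cast; ring
    have e2 : ∑ k ∈ Finset.range (jv + 1), (if iv + s = k then (1:ℝ) else 0)
        = if iv + s ≤ jv then 1 else 0 := by
      rw [Finset.sum_ite_eq (Finset.range (jv + 1)) (iv + s) (fun _ => (1:ℝ))]
      simp only [Finset.mem_range]
      by_cases h : iv + s ≤ jv
      · rw [if_pos (by omega), if_pos h]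
      · rw [if_neg (by omega), if_neg h]
    have e3 : ∑ k ∈ Finset.range (jv + 1), (if iv + s = k + 1 then (1:ℝ) else 0)
        = if iv + s ≤ jv + 1 then 1 else 0 := by
      rw [Finset.sum_congr rfl (fun k _ => show (if iv + s = k + 1 then (1:ℝ) else 0)
          = (if k = iv + s - 1 then 1 else 0) by
        by_cases h : iv + s = k + 1
        · rw [if_pos h, if_pos (by omega)]
        · rw [if_neg h, if_neg (by omega)]),
        Finset.sum_ite_eq' (Finset.range (jv + 1)) (iv + s - 1) (fun _ => (1:ℝ))]
      simp only [Finset.mem_range]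
      by_cases h : iv + s ≤ jv + 1
      · rw [if_pos (by omega), if_pos h]
      · rw [if_neg (by omega), if_neg h]
    rw [e1, e2, e3]
    have : (if iv + s ≤ jv then (1:ℝ) else 0) - (if iv + s ≤ jv + 1 then 1 else 0)
        = -(if iv + s = jv + 1 then 1 else 0) := by
      split_ifs <;> (try norm_num) <;> (try omega)
    rw [this]
    ring
  have hBU : B * U = Matrix.of fun i j : Fin (m + 1) =>
      Ring.choose (μ + i.1 + j.1 + s + 2) j.1 - ε * (if i.1 + s = j.1 + 1 then 1 else 0) := by
    ext i j
    rw [Matrix.mul_apply]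
    have step : ∀ k : Fin (m + 1), B i k * U k j =
        if k.1 ≤ j.1 then (Ring.choose (μ + i.1 + k.1 + s + 1) k.1 +
          ε * ((if i.1 + s = k.1 then 1 else 0) - (if i.1 + s = k.1 + 1 then 1 else 0))) else 0 := by
      intro k
      simp only [hB, hU, Matrix.of_apply, Fin.le_def, mul_ite, mul_one, mul_zero]
    rw [Finset.sum_congr rfl fun k _ => step k,
      Fin.sum_univ_eq_sum_range (fun k : ℕ => if k ≤ j.1 then
        (Ring.choose (μ + i.1 + k + s + 1) k +
          ε * ((if i.1 + s = k then (1:ℝ) else 0) - (if i.1 + s = k + 1 then 1 else 0)))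
        else 0) (m + 1)]
    rw [← Finset.sum_subset (Finset.range_subset_range.mpr (show j.1 + 1 ≤ m + 1 by omega))
      (fun x _ hnx => if_neg (by simp only [Finset.mem_range] at hnx; omega))]
    rw [Finset.sum_congr rfl (fun x hx => if_pos (by
      simp only [Finset.mem_range] at hx; omega))]
    rw [key i.1 j.1 j.isLt]
    simp
  calc M.det = ((L * M).submatrix Fin.succ Fin.succ).det := hdet1
    _ = B.det := by rw [hBeq]
    _ = (B * U).det := by rw [Matrix.det_mul, hdetU, mul_one]
    _ = _ := by rw [hBU]

/-- Lemma (famA): `E_{s,0}^μ(n) = D_{s-1,0}^{μ+3}(n-1)` and `D_{s,0}^μ(n) = E_{s-1,0}^{μ+3}(n-1)`. -/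
theorem famA (μ : ℝ) (n s : ℕ) (hs : 1 ≤ s) (hsn : s ≤ n) (hn : 1 < n) :
    detE μ s 0 n = detD (μ + 3) ((s : ℤ) - 1) 0 (n - 1) ∧
    detD μ s 0 n = detE (μ + 3) ((s : ℤ) - 1) 0 (n - 1) := by
  obtain ⟨m, rfl⟩ : ∃ m, n = m + 2 := ⟨n - 2, by omega⟩
  have e1 : detE μ (s : ℤ) 0 (m + 2) = (Matrix.of fun i j : Fin (m + 2) =>
      Ring.choose ((μ - 2) + i.1 + j.1 + s) j.1
        + (-1 : ℝ) * (if i.1 + s = j.1 then 1 else 0)).det := by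
    unfold detE
    congr 1
    ext i j
    simp only [Matrix.of_apply, Nat.add_zero]
    have harg : μ + ((i.1 + 1 : ℕ) : ℝ) + ((j.1 + 1 : ℕ) : ℝ) + (((s : ℤ)) : ℝ) + ((0 : ℕ) : ℝ) - 4
        = (μ - 2) + i.1 + j.1 + s := by push_cast; ring
    rw [harg]
    by_cases h : i.1 + s = j.1
    · rw [if_pos (show ((i.1 : ℤ) + 1) + ((s : ℕ) : ℤ) = ((j.1 : ℤ) + 1) + ((0 : ℕ) : ℤ) by
        push_cast; omega), if_pos h]
      ring
    · rw [if_neg (show ¬(((i.1 : ℤ) + 1) + ((s : ℕ) : ℤ) = ((j.1 : ℤ) + 1) + ((0 : ℕ) : ℤ)) by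
        push_cast; omega), if_neg h]
      ring
  have d1 : detD μ (s : ℤ) 0 (m + 2) = (Matrix.of fun i j : Fin (m + 2) =>
      Ring.choose ((μ - 2) + i.1 + j.1 + s) j.1
        + (1 : ℝ) * (if i.1 + s = j.1 then 1 else 0)).det := by
    unfold detD
    congr 1
    ext i j
    simp only [Matrix.of_apply, Nat.add_zero]
    have harg : μ + ((i.1 + 1 : ℕ) : ℝ) + ((j.1 + 1 : ℕ) : ℝ) + (((s : ℤ)) : ℝ) + ((0 : ℕ) : ℝ) - 4
        = (μ - 2) + i.1 + j.1 + s := by push_cast; ring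
    rw [harg]
    by_cases h : i.1 + s = j.1
    · rw [if_pos (show ((i.1 : ℤ) + 1) + ((s : ℕ) : ℤ) = ((j.1 : ℤ) + 1) + ((0 : ℕ) : ℤ) by
        push_cast; omega), if_pos h]
      ring
    · rw [if_neg (show ¬(((i.1 : ℤ) + 1) + ((s : ℕ) : ℤ) = ((j.1 : ℤ) + 1) + ((0 : ℕ) : ℤ)) by
        push_cast; omega), if_neg h]
      ring
  have d2 : detD (μ + 3) ((s : ℤ) - 1) 0 (m + 1) = (Matrix.of fun i j : Fin (m + 1) =>
      Ring.choose ((μ - 2) + i.1 + j.1 + s + 2) j.1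
        - (-1 : ℝ) * (if i.1 + s = j.1 + 1 then 1 else 0)).det := by
    unfold detD
    congr 1
    ext i j
    simp only [Matrix.of_apply, Nat.add_zero]
    have harg : (μ + 3) + ((i.1 + 1 : ℕ) : ℝ) + ((j.1 + 1 : ℕ) : ℝ) + (((s : ℤ) - 1 : ℤ) : ℝ)
        + ((0 : ℕ) : ℝ) - 4 = (μ - 2) + i.1 + j.1 + s + 2 := by push_cast; ring
    rw [harg]
    by_cases h : i.1 + s = j.1 + 1
    · rw [if_pos (show ((i.1 : ℤ) + 1) + ((s : ℤ) - 1) = ((j.1 : ℤ) + 1) + ((0 : ℕ) : ℤ) by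
        push_cast; omega), if_pos h]
      ring
    · rw [if_neg (show ¬(((i.1 : ℤ) + 1) + ((s : ℤ) - 1) = ((j.1 : ℤ) + 1) + ((0 : ℕ) : ℤ)) by
        push_cast; omega), if_neg h]
      ring
  have e2 : detE (μ + 3) ((s : ℤ) - 1) 0 (m + 1) = (Matrix.of fun i j : Fin (m + 1) =>
      Ring.choose ((μ - 2) + i.1 + j.1 + s + 2) j.1
        - (1 : ℝ) * (if i.1 + s = j.1 + 1 then 1 else 0)).det := by
    unfold detE
    congr 1
    ext i j
    simp only [Matrix.of_apply, Nat.add_zero]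
    have harg : (μ + 3) + ((i.1 + 1 : ℕ) : ℝ) + ((j.1 + 1 : ℕ) : ℝ) + (((s : ℤ) - 1 : ℤ) : ℝ)
        + ((0 : ℕ) : ℝ) - 4 = (μ - 2) + i.1 + j.1 + s + 2 := by push_cast; ring
    rw [harg]
    by_cases h : i.1 + s = j.1 + 1
    · rw [if_pos (show ((i.1 : ℤ) + 1) + ((s : ℤ) - 1) = ((j.1 : ℤ) + 1) + ((0 : ℕ) : ℤ) by
        push_cast; omega), if_pos h]
      ring
    · rw [if_neg (show ¬(((i.1 : ℤ) + 1) + ((s : ℤ) - 1) = ((j.1 : ℤ) + 1) + ((0 : ℕ) : ℤ)) by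
        push_cast; omega), if_neg h]
      ring
  have hsub : m + 2 - 1 = m + 1 := rfl
  refine ⟨?_, ?_⟩
  · rw [hsub, e1, d2]
    exact reduce (μ - 2) s hs (-1) m
  · rw [hsub, d1, e2]
    exact reduce (μ - 2) s hs 1 m
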